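/- Let T be a traversal tree (DFS or BFS) of a temporal graph G rooted at source s with starting time t_s, satisfying: (i) every root-to-node path in T is a temporal path in G with all edge times ≥ t_s, and (ii) whenever a node occurrence u in T has visit time σ(u) and (u,w,t) ∈ E with t ≥ σ(u), some occurrence of w appears in T with visit time ≤ t. Then the set of distinct vertices appearing in T equals the set of vertices reachable from s in G starting at time t_s. -/

import Mathlib

/-- Consecutive temporal edges: the head of the first equals the tail of the
second, and times are nondecreasing. -/
def tstep {V : Type*} (e f : V × V × ℕ) : Prop := e.2.1 = f.1 ∧ e.2.2 ≤ f.2.2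

/-- A temporal path in a temporal graph with edge set `E`: a list of temporal
edges, all in `E`, with matching consecutive vertices and nondecreasing times. -/
def IsTPath {V : Type*} (E : Set (V × V × ℕ)) (P : List (V × V × ℕ)) : Prop :=
  (∀ e ∈ P, e ∈ E) ∧ P.Chain' tstep

/-- Temporal reachability starting at time `ts`. -/
def Reaches {V : Type*} (E : Set (V × V × ℕ)) (ts : ℕ) (u v : V) : Prop :=
  u = v ∨ ∃ (P : List (V × V × ℕ)) (hne : P ≠ []), IsTPath E P ∧
    (P.head hne).1 = u ∧ (P.getLast hne).2.1 = v ∧ ts ≤ (P.head hne).2.2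

theorem stmt9 {V : Type*} (E : Set (V × V × ℕ)) (s : V) (ts : ℕ)
    (N : Type*) (root : N) (vert : N → V) (σ : N → ℕ) (p : N → N)
    (hproot : p root = root) (hvroot : vert root = s) (hσroot : σ root = ts)
    (hwf : ∀ n : N, ∃ k : ℕ, p^[k] n = root)
    (hi : ∀ n : N, n ≠ root →
      (vert (p n), vert n, σ n) ∈ E ∧ ts ≤ σ n ∧ σ (p n) ≤ σ n)
    (hii : ∀ (n : N) (w : V) (t : ℕ), (vert n, w, t) ∈ E → σ n ≤ t →
      ∃ m : N, vert m = w ∧ σ m ≤ t) :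
    {v : V | ∃ n : N, vert n = v} = {v : V | Reaches E ts s v} := by
  -- Forward: every tree node is reachable.
  have fwd : ∀ (k : ℕ) (n : N), p^[k] n = root → n = root ∨
      ∃ (P : List (V × V × ℕ)) (hne : P ≠ []), IsTPath E P ∧
        (P.head hne).1 = s ∧ (P.getLast hne).2.1 = vert n ∧
        ts ≤ (P.head hne).2.2 ∧ (P.getLast hne).2.2 = σ n := by
    intro k
    induction k with
    | zero => intro n h; exact Or.inl h
    | succ k ih =>
      intro n h
      by_cases hn : n = root
      · exact Or.inl hn
      · right
        obtain ⟨he, hts, hσ⟩ := hi n hn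
        rw [Function.iterate_succ_apply] at h
        rcases ih (p n) h with hpr | ⟨P, hne, ⟨hPE, hPc⟩, hh, hl, hht, hlt⟩
        · refine ⟨[(s, vert n, σ n)], by simp, ⟨?_, List.isChain_singleton _⟩, rfl, rfl, hts, rfl⟩
          intro e he'
          simp at he'
          subst he'
          rwa [← hvroot, ← hpr]
        · refine ⟨P ++ [(vert (p n), vert n, σ n)], by simp, ⟨?_, ?_⟩, ?_, ?_, ?_, ?_⟩
          · intro e he'
            rcases List.mem_append.1 he' with h1 | h1
            · exact hPE e h1
            · simp at h1; subst h1; exact he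
          · rw [List.Chain', List.isChain_append]
            refine ⟨hPc, List.isChain_singleton _, ?_⟩
            intro x hx y hy
            simp at hy
            subst hy
            rw [List.getLast?_eq_getLast (l := P) hne] at hx
            simp at hx
            subst hx
            exact ⟨hl, hlt ▸ hσ⟩
          · rw [List.head_append_of_ne_nil hne]; exact hh
          · rw [List.getLast_append]; simp
          · rw [List.head_append_of_ne_nil hne]; exact hht
          · rw [List.getLast_append]; simp
  -- Backward: walk a temporal path through (ii).
  have bwd : ∀ (P : List (V × V × ℕ)), (∀ e ∈ P, e ∈ E) → P.Chain' tstep →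
      ∀ (n : N) (hne : P ≠ []), vert n = (P.head hne).1 → σ n ≤ (P.head hne).2.2 →
      ∃ m : N, vert m = (P.getLast hne).2.1 ∧ σ m ≤ (P.getLast hne).2.2 := by
    intro P
    induction P with
    | nil => intro _ _ _ hne; exact absurd rfl hne
    | cons e Q ih =>
      intro hPE hPc n hne hh ht
      simp only [List.head_cons] at hh ht
      obtain ⟨m, hm, hmt⟩ := hii n e.2.1 e.2.2 (by rw [hh]; exact hPE e (by simp)) ht
      rcases eq_or_ne Q [] with hQ | hQ
      · subst hQ
        exact ⟨m, hm, hmt⟩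
      · have hch : tstep e (Q.head hQ) := by
          rcases Q with _ | ⟨f, R⟩
          · exact absurd rfl hQ
          · exact (List.isChain_cons_cons.1 hPc).1
        obtain ⟨m', hm', hm't⟩ := ih (fun f hf => hPE f (List.mem_cons_of_mem _ hf))
          (List.IsChain.tail hPc) m hQ (hm.trans hch.1) (hmt.trans hch.2)
        refine ⟨m', ?_, ?_⟩
        · rwa [List.getLast_cons hQ]
        · rwa [List.getLast_cons hQ]
  ext v
  simp only [Set.mem_setOf_eq]
  constructor
  · rintro ⟨n, rfl⟩
    obtain ⟨k, hk⟩ := hwf n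
    rcases fwd k n hk with rfl | ⟨P, hne, hP, hh, hl, hht, _⟩
    · exact Or.inl hvroot.symm
    · exact Or.inr ⟨P, hne, hP, hh, hl, hht⟩
  · rintro (rfl | ⟨P, hne, ⟨hPE, hPc⟩, hh, hl, hht⟩)
    · exact ⟨root, hvroot⟩
    · obtain ⟨m, hm, _⟩ := bwd P hPE hPc root hne (hvroot.trans hh.symm) (hσroot ▸ hht)
      exact ⟨m, hm ▸ hl⟩
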